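/- Fix integers m ≥ 3 and i with 1 ≤ i ≤ m. Let w be a list of signed symbols (j, ε), with j ∈ {1, …, m} \ {i} and ε ∈ {+, −}, in which each of the 2(m−1) signed symbols occurs exactly once. Suppose: (i) for all k, ℓ with i < k < ℓ ≤ m, the sublist of w consisting of the symbols with index k or ℓ equals [(k,−), (ℓ,−), (ℓ,+), (k,+)]; (ii) for all j, ℓ with 1 ≤ j < i < ℓ ≤ m, the sublist of symbols with index j or ℓ equals [(j,+), (j,−), (ℓ,−), (ℓ,+)]; and (iii) for all j, k with 1 ≤ j < k < i, the sublist of symbols with index j or k equals [(j,+), (j,−), (k,+), (k,−)]. Then w equals the concatenation [(1,+), (1,−), (2,+), (2,−), …, (i−1,+), (i−1,−)] ++ [(i+1,−), (i+2,−), …, (m,−)] ++ [(m,+), (m−1,+), …, (i+1,+)]. -/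

import Mathlib

/-- position key for the target code -/
def skey (m i : ℕ) (x : ℕ × Bool) : ℕ :=
  if x.1 < i then 2 * (x.1 - 1) + (if x.2 then 0 else 1)
  else 2 * (i - 1) + (if x.2 then (m - i) + (m - x.1) else x.1 - i - 1)

lemma pw3 (m i j k : ℕ) (h1 : 1 ≤ j) (hjk : j < k) (hki : k < i) :
    List.Pairwise (fun a b => skey m i a < skey m i b)
      [(j, true), (j, false), (k, true), (k, false)] := by
  simp [skey, List.pairwise_cons]
  split_ifs <;> omega

lemma pw1 (m i k l : ℕ) (h1 : i < k) (hjk : k < l) (hki : l ≤ m) :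
    List.Pairwise (fun a b => skey m i a < skey m i b)
      [(k, false), (l, false), (l, true), (k, true)] := by
  simp [skey, List.pairwise_cons]
  split_ifs <;> omega

lemma pw2 (m i j l : ℕ) (h1 : 1 ≤ j) (hjk : j < i) (hki : i < l) (hlm : l ≤ m) :
    List.Pairwise (fun a b => skey m i a < skey m i b)
      [(j, true), (j, false), (l, false), (l, true)] := by
  simp [skey, List.pairwise_cons]
  split_ifs <;> omega

/-- Signed symbols `(j, ε)` with `ε = true` for `+` and `ε = false` for `−`.
Fix `m ≥ 3` and `1 ≤ i ≤ m`.  If `w` is a list in which each signed symbol `(j, ε)` with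
`j ∈ {1, …, m} \ {i}` occurs exactly once, and the sublists on the index pairs are as in the
colour-2 case ((i) `[(k,−),(ℓ,−),(ℓ,+),(k,+)]` for `i < k < ℓ ≤ m`, (ii)
`[(j,+),(j,−),(ℓ,−),(ℓ,+)]` for `j < i < ℓ`, (iii) `[(j,+),(j,−),(k,+),(k,−)]` for
`j < k < i`), then `w` is the code `[1⁺1⁻:i⁺i⁻)(i⁻:m⁻][m⁺:i⁺)`. -/
theorem stmt13 (m i : ℕ) (hm : 3 ≤ m) (hi1 : 1 ≤ i) (him : i ≤ m)
    (w : List (ℕ × Bool))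
    (hmem : ∀ x ∈ w, 1 ≤ x.1 ∧ x.1 ≤ m ∧ x.1 ≠ i)
    (hcount : ∀ j : ℕ, 1 ≤ j → j ≤ m → j ≠ i → ∀ ε : Bool, w.count (j, ε) = 1)
    (h1 : ∀ k l : ℕ, i < k → k < l → l ≤ m →
      w.filter (fun x => decide (x.1 = k ∨ x.1 = l)) =
        [(k, false), (l, false), (l, true), (k, true)])
    (h2 : ∀ j l : ℕ, 1 ≤ j → j < i → i < l → l ≤ m →
      w.filter (fun x => decide (x.1 = j ∨ x.1 = l)) =
        [(j, true), (j, false), (l, false), (l, true)])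
    (h3 : ∀ j k : ℕ, 1 ≤ j → j < k → k < i →
      w.filter (fun x => decide (x.1 = j ∨ x.1 = k)) =
        [(j, true), (j, false), (k, true), (k, false)]) :
    w = ((List.range (i - 1)).flatMap fun t => [(t + 1, true), (t + 1, false)])
      ++ ((List.range (m - i)).map fun t => (i + 1 + t, false))
      ++ ((List.range (m - i)).map fun t => (m - t, true)) := by
  set r : ℕ × Bool → ℕ × Bool → Prop := fun a b => skey m i a < skey m i b with hrdef
  set T : List (ℕ × Bool) :=
    ((List.range (i - 1)).flatMap fun t => [(t + 1, true), (t + 1, false)])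
      ++ ((List.range (m - i)).map fun t => (i + 1 + t, false))
      ++ ((List.range (m - i)).map fun t => (m - t, true)) with hTdef
  -- membership characterization of T
  have hmemT : ∀ x : ℕ × Bool, x ∈ T ↔ (1 ≤ x.1 ∧ x.1 ≤ m ∧ x.1 ≠ i) := by
    rintro ⟨j, ε⟩
    simp only [hTdef, List.mem_append, List.mem_flatMap, List.mem_range, List.mem_map,
      List.mem_cons, List.not_mem_nil, or_false, Prod.mk.injEq]
    constructor
    · rintro ((⟨t, ht, (⟨rfl, rfl⟩ | ⟨rfl, rfl⟩)⟩) | ⟨t, ht, rfl, rfl⟩ | ⟨t, ht, rfl, rfl⟩) <;>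
        simp <;> omega
    · rintro ⟨hj1, hjm, hji⟩
      by_cases hji' : j < i
      · refine Or.inl (Or.inl ⟨j - 1, by omega, ?_⟩)
        cases ε
        · exact Or.inr ⟨by omega, rfl⟩
        · exact Or.inl ⟨by omega, rfl⟩
      · cases ε
        · exact Or.inl (Or.inr ⟨j - (i + 1), by omega, by omega, rfl⟩)
        · exact Or.inr ⟨m - j, by omega, by omega, rfl⟩
  -- T is sorted
  have hTpw : T.Pairwise r := by
    rw [hTdef, List.append_assoc, List.pairwise_append]
    refine ⟨?_, ?_, ?_⟩
    · rw [List.pairwise_flatMap]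
      constructor
      · intro t ht
        simp only [List.mem_range] at ht
        simp [hrdef, skey, List.pairwise_cons]
        split_ifs <;> omega
      · refine (List.pairwise_lt_range (n := _)).imp_of_mem ?_
        intro a b ha hb hab
        simp only [List.mem_range] at ha hb
        intro x hx y hy
        simp only [List.mem_cons, List.not_mem_nil, or_false] at hx hy
        rcases hx with rfl | rfl <;> rcases hy with rfl | rfl <;>
          (simp [hrdef, skey]; split_ifs <;> omega)
    · rw [List.pairwise_append]
      refine ⟨?_, ?_, ?_⟩
      · rw [List.pairwise_map]
        refine (List.pairwise_lt_range (n := _)).imp_of_mem ?_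
        intro a b ha hb hab
        simp only [List.mem_range] at ha hb
        simp [hrdef, skey]; split_ifs <;> omega
      · rw [List.pairwise_map]
        refine (List.pairwise_lt_range (n := _)).imp_of_mem ?_
        intro a b ha hb hab
        simp only [List.mem_range] at ha hb
        simp [hrdef, skey]
        split_ifs <;> omega
      · intro x hx y hy
        simp only [List.mem_map, List.mem_range] at hx hy
        obtain ⟨t, ht, rfl⟩ := hx
        obtain ⟨s, hs, rfl⟩ := hy
        simp [hrdef, skey]
        split_ifs <;> omega
    · intro x hx y hy
      simp only [List.mem_flatMap, List.mem_range, List.mem_cons, List.not_mem_nil, or_false,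
        List.mem_append, List.mem_map] at hx hy
      obtain ⟨t, ht, (rfl | rfl)⟩ := hx <;>
        rcases hy with (⟨s, hs, rfl⟩ | ⟨s, hs, rfl⟩) <;>
          (simp [hrdef, skey]; split_ifs <;> omega)
  -- T has no duplicates
  have hTnd : T.Nodup := hTpw.imp fun {a b} h => by rintro rfl; exact lt_irrefl _ h
  -- w is a permutation of T
  have hbeq : (instBEqOfDecidableEq : BEq (ℕ × Bool)) = instBEqProd := by
    have l1 : @LawfulBEq (ℕ × Bool) instBEqOfDecidableEq :=
      inferInstance
    exact @lawful_beq_subsingleton _ _ _ l1 inferInstance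
  have hperm : List.Perm w T := by
    rw [List.perm_iff_count]
    intro x
    by_cases hx : 1 ≤ x.1 ∧ x.1 ≤ m ∧ x.1 ≠ i
    · rw [List.count_eq_one_of_mem hTnd ((hmemT x).mpr hx)]
      exact hcount x.1 hx.1 hx.2.1 hx.2.2 x.2
    · rw [List.count_eq_zero.mpr (fun h => hx (hmem x h)),
        List.count_eq_zero.mpr (fun h => hx ((hmemT x).mp h))]
  -- w has no duplicates
  have hwnd : w.Nodup := hperm.nodup_iff.mpr hTnd
  -- w is sorted
  have hwpw : w.Pairwise r := by
    rw [List.pairwise_iff_forall_sublist]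
    intro a b hab
    have hamem : a ∈ w := hab.subset (by simp)
    have hbmem : b ∈ w := hab.subset (by simp)
    obtain ⟨ha1, ham, hai⟩ := hmem a hamem
    obtain ⟨hb1, hbm, hbi⟩ := hmem b hbmem
    -- main step: if both indices lie in a pair {j,k} whose filter F is sorted, then r a b
    have main : ∀ (F : List (ℕ × Bool)) (j k : ℕ),
        w.filter (fun x => decide (x.1 = j ∨ x.1 = k)) = F → F.Pairwise r →
        (a.1 = j ∨ a.1 = k) → (b.1 = j ∨ b.1 = k) → r a b := by
      intro F j k hF hFpw ha hb
      have hsub : List.Sublist [a, b] F := by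
        rw [← hF]
        have := hab.filter (fun x => decide (x.1 = j ∨ x.1 = k))
        simpa [List.filter, ha, hb] using this
      have := (hFpw.sublist hsub)
      rw [List.pairwise_cons] at this
      exact this.1 b (by simp)
    by_cases hjab : a.1 = b.1
    · -- same index: pick an auxiliary index c
      obtain ⟨c, hc1, hcm, hci, hca⟩ : ∃ c, 1 ≤ c ∧ c ≤ m ∧ c ≠ i ∧ c ≠ a.1 := by
        by_cases e1 : 1 ≠ i ∧ 1 ≠ a.1
        · exact ⟨1, le_refl 1, by omega, e1.1, e1.2⟩
        · by_cases e2 : 2 ≠ i ∧ 2 ≠ a.1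
          · exact ⟨2, by omega, by omega, e2.1, e2.2⟩
          · exact ⟨3, by omega, by omega, by omega, by omega⟩
      rcases lt_or_gt_of_ne hai with hlt | hgt
      · rcases lt_or_gt_of_ne hci with hclt | hcgt
        · rcases lt_or_gt_of_ne hca with h | h
          · exact main _ c a.1 (h3 c a.1 hc1 h hlt) (pw3 m i c a.1 hc1 h hlt)
              (Or.inr rfl) (Or.inr hjab.symm)
          · exact main _ a.1 c (h3 a.1 c ha1 h hclt) (pw3 m i a.1 c ha1 h hclt)
              (Or.inl rfl) (Or.inl hjab.symm)
        · exact main _ a.1 c (h2 a.1 c ha1 hlt hcgt hcm) (pw2 m i a.1 c ha1 hlt hcgt hcm)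
            (Or.inl rfl) (Or.inl hjab.symm)
      · rcases lt_or_gt_of_ne hci with hclt | hcgt
        · exact main _ c a.1 (h2 c a.1 hc1 hclt hgt ham) (pw2 m i c a.1 hc1 hclt hgt ham)
            (Or.inr rfl) (Or.inr hjab.symm)
        · rcases lt_or_gt_of_ne hca with h | h
          · exact main _ c a.1 (h1 c a.1 hcgt h ham) (pw1 m i c a.1 hcgt h ham)
              (Or.inr rfl) (Or.inr hjab.symm)
          · exact main _ a.1 c (h1 a.1 c hgt h hcm) (pw1 m i a.1 c hgt h hcm)
              (Or.inl rfl) (Or.inl hjab.symm)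
    · -- different indices
      rcases lt_or_gt_of_ne hai with halt | hagt <;>
        rcases lt_or_gt_of_ne hbi with hblt | hbgt
      · rcases lt_or_gt_of_ne hjab with h | h
        · exact main _ a.1 b.1 (h3 a.1 b.1 ha1 h hblt) (pw3 m i a.1 b.1 ha1 h hblt)
            (Or.inl rfl) (Or.inr rfl)
        · exact main _ b.1 a.1 (h3 b.1 a.1 hb1 h halt) (pw3 m i b.1 a.1 hb1 h halt)
            (Or.inr rfl) (Or.inl rfl)
      · exact main _ a.1 b.1 (h2 a.1 b.1 ha1 halt hbgt hbm) (pw2 m i a.1 b.1 ha1 halt hbgt hbm)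
          (Or.inl rfl) (Or.inr rfl)
      · exact main _ b.1 a.1 (h2 b.1 a.1 hb1 hblt hagt ham) (pw2 m i b.1 a.1 hb1 hblt hagt ham)
          (Or.inr rfl) (Or.inl rfl)
      · rcases lt_or_gt_of_ne hjab with h | h
        · exact main _ a.1 b.1 (h1 a.1 b.1 hagt h hbm) (pw1 m i a.1 b.1 hagt h hbm)
            (Or.inl rfl) (Or.inr rfl)
        · exact main _ b.1 a.1 (h1 b.1 a.1 hbgt h ham) (pw1 m i b.1 a.1 hbgt h ham)
            (Or.inr rfl) (Or.inl rfl)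
  exact List.Perm.eq_of_pairwise (fun a b _ _ h h' => absurd (h.trans h') (lt_irrefl _)) hwpw hTpw hperm
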